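/- Let Ξ ⊂ L·ℤ² with L sufficiently large, let x₀ ∈ ℝ², and let (g_i)_{ξ_i ∈ Ξ} be nonnegative reals. Suppose h : ℝ² → ℝ satisfies |h(x)| ≤ C·∑_{i,j ∈ Ξ, i≠j} g_i·θ(x − ξ_j)·θ(ξ_i − ξ_j) for all x, where θ(z) = (1+|z|)^{-3}. Then ∫_{ℝ²} |h(x)|·θ(x−x₀) dx ≤ C₁·∑_{i ∈ Ξ} g_i·θ(x₀ − ξ_i), with C₁ independent of L, x₀, and Ξ. -/

import Mathlib

open MeasureTheory

noncomputable def theta (z : EuclideanSpace ℝ (Fin 2)) : ℝ := ((1 + ‖z‖) ^ 3)⁻¹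

noncomputable def latt (n : ℤ × ℤ) : EuclideanSpace ℝ (Fin 2) :=
  (WithLp.equiv 2 (Fin 2 → ℝ)).symm ![(n.1 : ℝ), (n.2 : ℝ)]

abbrev E2 := EuclideanSpace ℝ (Fin 2)
lemma theta_pos (z : E2) : 0 < theta z := by
  have := norm_nonneg z; unfold theta; positivity

lemma theta_nonneg (z : E2) : 0 ≤ theta z := (theta_pos z).le

lemma one_add_norm_pos (z : E2) : (0:ℝ) < 1 + ‖z‖ := by
  have := norm_nonneg z; linarith

lemma theta_le_one (z : E2) : theta z ≤ 1 := by
  unfold theta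
  rw [inv_le_one_iff₀]
  right
  exact one_le_pow₀ (by have := norm_nonneg z; linarith)

lemma theta_anti {a b : E2} (hab : ‖a‖ ≤ ‖b‖) : theta b ≤ theta a := by
  unfold theta
  have h0 := norm_nonneg a
  have : (1 + ‖a‖)^3 ≤ (1 + ‖b‖)^3 := by
    apply pow_le_pow_left₀ (by linarith); linarith
  exact inv_anti₀ (by positivity) this

lemma theta_quarter {a b : E2} (hq : (1 + ‖b‖) / 4 ≤ 1 + ‖a‖) :
    theta a ≤ 64 * theta b := by
  unfold theta
  have h1 := one_add_norm_pos b
  have h2 := one_add_norm_pos a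
  rw [inv_le_iff_one_le_mul₀ (by positivity)]
  have h3 : ((1 + ‖b‖)/4)^3 ≤ (1+‖a‖)^3 := by
    apply pow_le_pow_left₀ (by positivity) hq
  have h64 : (1+‖b‖)^3 ≤ 64 * (1+‖a‖)^3 := by nlinarith
  calc (1:ℝ) = (1+‖b‖)^3 * ((1+‖b‖)^3)⁻¹ := by field_simp
    _ ≤ (64 * (1+‖a‖)^3) * ((1+‖b‖)^3)⁻¹ := by gcongr
    _ = 64 * ((1+‖b‖)^3)⁻¹ * (1+‖a‖)^3 := by ring

lemma theta_mul_le (u v : E2) :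
    theta u * theta v ≤ 8 * theta (u - v) * (theta u + theta v) := by
  have key : ∀ w : E2, 1 + ‖u - v‖ ≤ 2 * (1 + ‖w‖) →
      theta w ≤ 8 * theta (u - v) := by
    intro w hw
    unfold theta
    rw [inv_le_iff_one_le_mul₀ (by positivity)]
    have h1 := one_add_norm_pos (u - v)
    have h2 := one_add_norm_pos w
    have h3 : (1+‖u-v‖)^3 ≤ (2 * (1+‖w‖))^3 := by
      apply pow_le_pow_left₀ (by linarith) hw
    have : (1+‖u-v‖)^3 ≤ 8 * (1+‖w‖)^3 := by nlinarith
    calc (1:ℝ) = (1+‖u-v‖)^3 * ((1+‖u-v‖)^3)⁻¹ := by field_simp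
      _ ≤ (8 * (1+‖w‖)^3) * ((1+‖u-v‖)^3)⁻¹ := by gcongr
      _ = 8 * ((1+‖u-v‖)^3)⁻¹ * (1+‖w‖)^3 := by ring
  rcases le_total ‖u‖ ‖v‖ with hle | hle
  · have hv : theta v ≤ 8 * theta (u - v) := by
      refine key v ?_
      have := norm_sub_le u v
      linarith
    nlinarith [theta_nonneg u, theta_nonneg v, theta_nonneg (u-v)]
  · have hu : theta u ≤ 8 * theta (u - v) := by
      refine key u ?_
      have := norm_sub_le u v
      linarith
    nlinarith [theta_nonneg u, theta_nonneg v, theta_nonneg (u-v)]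

lemma theta_neg_eq (z : E2) : theta (-z) = theta z := by unfold theta; rw [norm_neg]

lemma theta_measurable : Measurable theta := by unfold theta; fun_prop

lemma integrable_theta : Integrable theta := by
  have h := integrable_one_add_norm (E := E2) (μ := volume) (r := 3)
    (by simp only [finrank_euclideanSpace, Fintype.card_fin]; norm_num)
  refine h.congr (Filter.Eventually.of_forall fun x => ?_)
  unfold theta
  rw [← Real.rpow_natCast (1 + ‖x‖) 3, ← Real.rpow_neg (by positivity)]
  norm_num
lemma meas_shift (a : E2) : Measurable fun x : E2 => ENNReal.ofReal (theta (x - a)) :=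
  (theta_measurable.comp (measurable_id.sub measurable_const)).ennreal_ofReal

noncomputable def Jc : ENNReal := ∫⁻ x : E2, ENNReal.ofReal (theta x)

lemma Jc_ne_top : Jc ≠ ⊤ := by
  have h := integrable_theta.2
  rw [HasFiniteIntegral] at h
  have : Jc ≤ ∫⁻ x : E2, ‖theta x‖₊ := by
    apply lintegral_mono fun x => ?_
    rw [← enorm_eq_nnnorm, ← ofReal_norm_eq_enorm, Real.norm_eq_abs, abs_of_nonneg (theta_nonneg x)]
  exact (lt_of_le_of_lt this h).ne

lemma lintegral_theta_shift (a : E2) :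
    ∫⁻ x : E2, ENNReal.ofReal (theta (x - a)) = Jc := by
  have := lintegral_add_right_eq_self (μ := volume)
    (fun x : E2 => ENNReal.ofReal (theta x)) (-a)
  simpa [sub_eq_add_neg, Jc] using this

lemma key_integral (a b : E2) :
    (∫⁻ x : E2, ENNReal.ofReal (theta (x - a)) * ENNReal.ofReal (theta (x - b))) ≤
      16 * Jc * ENNReal.ofReal (theta (a - b)) := by
  have step1 : ∀ x : E2, ENNReal.ofReal (theta (x - a)) * ENNReal.ofReal (theta (x - b)) ≤
      ENNReal.ofReal (8 * theta (b - a)) *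
        (ENNReal.ofReal (theta (x - a)) + ENNReal.ofReal (theta (x - b))) := by
    intro x
    rw [← ENNReal.ofReal_mul (theta_nonneg _), ← ENNReal.ofReal_add (theta_nonneg _)
      (theta_nonneg _), ← ENNReal.ofReal_mul (mul_nonneg (by norm_num) (theta_nonneg _))]
    apply ENNReal.ofReal_le_ofReal
    have := theta_mul_le (x - a) (x - b)
    have heq : (x - a) - (x - b) = b - a := by abel
    rw [heq] at this
    linarith
  calc (∫⁻ x : E2, ENNReal.ofReal (theta (x - a)) * ENNReal.ofReal (theta (x - b)))
      ≤ ∫⁻ x : E2, ENNReal.ofReal (8 * theta (b - a)) *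
          (ENNReal.ofReal (theta (x - a)) + ENNReal.ofReal (theta (x - b))) :=
        lintegral_mono step1
    _ = ENNReal.ofReal (8 * theta (b - a)) *
          ∫⁻ x : E2, (ENNReal.ofReal (theta (x - a)) + ENNReal.ofReal (theta (x - b))) := by
        rw [lintegral_const_mul]
        exact (meas_shift a).add (meas_shift b)
    _ = ENNReal.ofReal (8 * theta (b - a)) * (Jc + Jc) := by
        rw [lintegral_add_left (meas_shift a), lintegral_theta_shift, lintegral_theta_shift]
    _ ≤ 16 * Jc * ENNReal.ofReal (theta (a - b)) := by
        rw [ENNReal.ofReal_mul (by norm_num : (0:ℝ) ≤ 8)]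
        have hba : theta (b - a) = theta (a - b) := by
          rw [show b - a = -(a-b) by abel]; unfold theta; rw [norm_neg]
        rw [hba]
        apply le_of_eq
        rw [← two_mul, ENNReal.ofReal_ofNat]
        ring
lemma latt_apply_0 (n : ℤ × ℤ) : latt n 0 = (n.1 : ℝ) := rfl
lemma latt_apply_1 (n : ℤ × ℤ) : latt n 1 = (n.2 : ℝ) := rfl

lemma latt_sub (m n : ℤ × ℤ) : latt (m - n) = latt m - latt n := by
  apply PiLp.ext
  intro i
  fin_cases i <;>
    simp [latt, WithLp.equiv_symm_apply, PiLp.toLp_apply, Prod.fst_sub, Prod.snd_sub] <;> push_cast <;> ring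

lemma norm_latt (n : ℤ × ℤ) : ‖latt n‖ = Real.sqrt ((n.1:ℝ)^2 + (n.2:ℝ)^2) := by
  rw [EuclideanSpace.norm_eq]
  congr 1
  rw [Fin.sum_univ_two]
  simp [latt, WithLp.equiv_symm_apply, PiLp.toLp_apply, Real.norm_eq_abs, sq_abs]

lemma abs_le_norm_latt_1 (n : ℤ × ℤ) : |(n.1:ℝ)| ≤ ‖latt n‖ := by
  rw [norm_latt, ← Real.sqrt_sq_eq_abs]
  apply Real.sqrt_le_sqrt; nlinarith [sq_nonneg ((n.2:ℝ))]

lemma abs_le_norm_latt_2 (n : ℤ × ℤ) : |(n.2:ℝ)| ≤ ‖latt n‖ := by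
  rw [norm_latt, ← Real.sqrt_sq_eq_abs]
  apply Real.sqrt_le_sqrt; nlinarith [sq_nonneg ((n.1:ℝ))]

lemma one_le_norm_latt {n : ℤ × ℤ} (hn : n ≠ 0) : 1 ≤ ‖latt n‖ := by
  rcases Prod.mk.injEq n.1 n.2 0 0 ▸ (fun h => hn (Prod.ext_iff.mpr h)) with _
  by_cases h1 : n.1 = 0
  · have h2 : n.2 ≠ 0 := by
      intro h2; exact hn (Prod.ext_iff.mpr ⟨h1, h2⟩)
    calc (1:ℝ) ≤ |(n.2:ℝ)| := by
          rw [← Int.cast_abs]; exact_mod_cast Int.one_le_abs h2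
      _ ≤ _ := abs_le_norm_latt_2 n
  · calc (1:ℝ) ≤ |(n.1:ℝ)| := by
          rw [← Int.cast_abs]; exact_mod_cast Int.one_le_abs h1
      _ ≤ _ := abs_le_norm_latt_1 n

lemma summable_theta_latt : Summable fun n : ℤ × ℤ => theta (latt n) := by
  have hE := EisensteinSeries.summable_one_div_norm_rpow (k := 3) (by norm_num)
  have hE2 : Summable fun n : ℤ × ℤ => ‖(![n.1, n.2] : Fin 2 → ℤ)‖ ^ (-(3:ℝ)) := by
    exact hE.comp_injective ((finTwoArrowEquiv ℤ).symm.injective)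
  have hg : Summable fun n : ℤ × ℤ =>
      (if n = 0 then (1:ℝ) else 0) + ‖(![n.1, n.2] : Fin 2 → ℤ)‖ ^ (-(3:ℝ)) := by
    apply Summable.add _ hE2
    apply summable_of_ne_finset_zero (s := {0})
    intro n hn
    simp only [Finset.mem_singleton] at hn
    simp [hn]
  apply Summable.of_nonneg_of_le (fun n => theta_nonneg _) _ hg
  intro n
  by_cases hn : n = 0
  · subst hn
    have := theta_le_one (latt 0)
    have h2 : (0:ℝ) ≤ ‖(![(0:ℤ×ℤ).1, (0:ℤ×ℤ).2] : Fin 2 → ℤ)‖ ^ (-(3:ℝ)) := by positivity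
    rw [if_pos rfl]
    linarith
  · simp only [if_neg hn, zero_add]
    -- ‖![n.1,n.2]‖ = max natAbs; show theta (latt n) ≤ ‖x‖^(-3)
    have hnorm : (1:ℝ) ≤ ‖(![n.1, n.2] : Fin 2 → ℤ)‖ := by
      rw [EisensteinSeries.norm_eq_max_natAbs]
      have : n.1 ≠ 0 ∨ n.2 ≠ 0 := by
        by_contra hc
        push_neg at hc
        exact hn (Prod.ext_iff.mpr ⟨hc.1, hc.2⟩)
      rcases this with h | h
      · have := Int.one_le_abs h
        have : 1 ≤ (n.1).natAbs := by omega
        simp only [Matrix.cons_val_zero, Matrix.cons_val_one, Matrix.head_cons]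
        exact_mod_cast le_max_of_le_left (by exact_mod_cast this)
      · have := Int.one_le_abs h
        have : 1 ≤ (n.2).natAbs := by omega
        simp only [Matrix.cons_val_zero, Matrix.cons_val_one, Matrix.head_cons]
        exact_mod_cast le_max_of_le_right (by exact_mod_cast this)
    have hle : ‖(![n.1, n.2] : Fin 2 → ℤ)‖ ≤ ‖latt n‖ := by
      rw [EisensteinSeries.norm_eq_max_natAbs]
      simp only [Matrix.cons_val_zero, Matrix.cons_val_one, Matrix.head_cons]
      push_cast
      rw [Nat.cast_natAbs, Nat.cast_natAbs, Int.cast_abs, Int.cast_abs, max_le_iff]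
      exact ⟨abs_le_norm_latt_1 n, abs_le_norm_latt_2 n⟩
    have hpos : (0:ℝ) < ‖(![n.1, n.2] : Fin 2 → ℤ)‖ := by linarith
    rw [Real.rpow_neg hpos.le, show (3:ℝ) = ((3:ℕ):ℝ) by norm_num, Real.rpow_natCast]
    unfold theta
    apply inv_anti₀ (by positivity)
    apply pow_le_pow_left₀ hpos.le
    have := norm_nonneg (latt n)
    linarith
noncomputable def Ac : ENNReal := ∑' n : ℤ × ℤ, ENNReal.ofReal (theta (latt n))

lemma Ac_ne_top : Ac ≠ ⊤ := by
  rw [Ac, ← ENNReal.ofReal_tsum_of_nonneg (fun n => theta_nonneg _) summable_theta_latt]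
  exact ENNReal.ofReal_ne_top

lemma latt_zero : latt 0 = 0 := by
  apply PiLp.ext; intro i; fin_cases i <;> simp [latt, WithLp.equiv_symm_apply, PiLp.toLp_apply]

lemma theta_zero : theta 0 = 1 := by unfold theta; simp

lemma lattice_sum_bound {L : ℝ} (hL : 1 ≤ L) (x : E2) :
    (∑' n : ℤ × ℤ, ENNReal.ofReal (theta (x - L • latt n))) ≤ 64 * Ac := by
  have hL0 : (0:ℝ) < L := by linarith
  set m : ℤ × ℤ := (round (x 0 / L), round (x 1 / L)) with hm
  have hxm : ‖x - L • latt m‖ ≤ 3/4 * L := by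
    have key : ∀ (xi : ℝ) (k : ℤ), k = round (xi / L) → |xi - L * k| ≤ L / 2 := by
      intro xi k hk
      have h1 : |xi / L - k| ≤ 1/2 := hk ▸ abs_sub_round (xi / L)
      have h2 : xi - L * k = L * (xi / L - k) := by field_simp
      rw [h2, abs_mul, abs_of_pos hL0]
      nlinarith
    have e0 : (x - L • latt m) 0 = x 0 - L * (m.1 : ℝ) := by
      simp [latt, WithLp.equiv_symm_apply, PiLp.toLp_apply]
    have e1 : (x - L • latt m) 1 = x 1 - L * (m.2 : ℝ) := by
      simp [latt, WithLp.equiv_symm_apply, PiLp.toLp_apply]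
    rw [EuclideanSpace.norm_eq, Fin.sum_univ_two, e0, e1]
    have k0 := key (x 0) m.1 rfl
    have k1 := key (x 1) m.2 rfl
    have h34 : (0:ℝ) ≤ 3/4 * L := by linarith
    rw [show (3/4 * L : ℝ) = Real.sqrt ((3/4 * L)^2) from (Real.sqrt_sq h34).symm]
    apply Real.sqrt_le_sqrt
    rw [Real.norm_eq_abs, Real.norm_eq_abs, sq_abs, sq_abs]
    nlinarith [abs_nonneg (x 0 - L * (m.1:ℝ)), abs_nonneg (x 1 - L * (m.2:ℝ)),
      sq_abs (x 0 - L * (m.1:ℝ)), sq_abs (x 1 - L * (m.2:ℝ))]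
  have claim : ∀ n : ℤ × ℤ, theta (x - L • latt n) ≤ 64 * theta (latt (n - m)) := by
    intro n
    by_cases hnm : n = m
    · subst hnm
      rw [sub_self, latt_zero, theta_zero]
      have := theta_le_one (x - L • latt m)
      linarith
    · apply theta_quarter
      have htri : L * ‖latt (n - m)‖ ≤ ‖x - L • latt n‖ + ‖x - L • latt m‖ := by
        have h1 : ‖L • latt n - L • latt m‖ = L * ‖latt (n - m)‖ := by
          rw [← smul_sub, norm_smul, Real.norm_eq_abs, abs_of_pos hL0, latt_sub]
        have h2 : ‖L • latt n - L • latt m‖ ≤ ‖L • latt n - x‖ + ‖x - L • latt m‖ :=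
          norm_sub_le_norm_sub_add_norm_sub _ _ _
        rw [h1, norm_sub_rev] at h2
        exact h2
      have hk : 1 ≤ ‖latt (n - m)‖ := one_le_norm_latt (sub_ne_zero.mpr hnm)
      have hN : 0 ≤ ‖x - L • latt n‖ := norm_nonneg _
      nlinarith [mul_nonneg (sub_nonneg.mpr hL) (sub_nonneg.mpr hk)]
  calc (∑' n : ℤ × ℤ, ENNReal.ofReal (theta (x - L • latt n)))
      ≤ ∑' n : ℤ × ℤ, (64:ENNReal) * ENNReal.ofReal (theta (latt (n - m))) := by
        apply ENNReal.tsum_le_tsum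
        intro n
        calc ENNReal.ofReal (theta (x - L • latt n))
            ≤ ENNReal.ofReal (64 * theta (latt (n - m))) :=
              ENNReal.ofReal_le_ofReal (claim n)
          _ = (64:ENNReal) * ENNReal.ofReal (theta (latt (n - m))) := by
              rw [ENNReal.ofReal_mul (by norm_num : (0:ℝ) ≤ 64), ENNReal.ofReal_ofNat]
    _ = 64 * ∑' n : ℤ × ℤ, ENNReal.ofReal (theta (latt (n - m))) := ENNReal.tsum_mul_left
    _ = 64 * Ac := by
        congr 1
        exact (Equiv.subRight m).tsum_eq (fun k => ENNReal.ofReal (theta (latt k)))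

lemma theta_sub_rev (a b : E2) : theta (a - b) = theta (b - a) := by
  unfold theta; rw [norm_sub_rev]

lemma ofReal_tsum_le {ι : Type*} (f : ι → ℝ) (hf : ∀ i, 0 ≤ f i) :
    ENNReal.ofReal (∑' i, f i) ≤ ∑' i, ENNReal.ofReal (f i) := by
  by_cases hs : Summable f
  · rw [ENNReal.ofReal_tsum_of_nonneg hf hs]
  · rw [tsum_eq_zero_of_not_summable hs]; simp

lemma mul_tsum_mul (a b : ENNReal) {ι : Type*} (f : ι → ENNReal) :
    a * (∑' i, f i) * b = ∑' i, a * f i * b := by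
  rw [← ENNReal.tsum_mul_left, ← ENNReal.tsum_mul_right]

lemma tsum_subset_le (Ξ : Set (ℤ × ℤ)) (f : ℤ × ℤ → ENNReal) :
    (∑' j : Ξ, f j) ≤ ∑' j : ℤ × ℤ, f j :=
  ENNReal.tsum_comp_le_tsum_of_injective Subtype.val_injective f

theorem weighted_integral_offdiagonal_bound :
    ∀ C > (0 : ℝ), ∃ C₁ > (0 : ℝ), ∃ L₀ > (0 : ℝ), ∀ L ≥ L₀,
      ∀ (x₀ : EuclideanSpace ℝ (Fin 2)) (Ξ : Set (ℤ × ℤ)) (g : ℤ × ℤ → ℝ)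
        (h : EuclideanSpace ℝ (Fin 2) → ℝ),
        (∀ i, 0 ≤ g i) →
        Summable (fun i : Ξ => g i * theta (x₀ - L • latt i)) →
        (∀ x, |h x| ≤ C * ∑' i : Ξ, ∑' j : Ξ,
            if (i : ℤ × ℤ) ≠ (j : ℤ × ℤ) then
              g i * theta (x - L • latt j) * theta (L • latt i - L • latt j)
            else 0) →
        (∫⁻ x, ENNReal.ofReal (|h x| * theta (x - x₀))) ≤
          ENNReal.ofReal (C₁ * ∑' i : Ξ, g i * theta (x₀ - L • latt i)) := by
  intro C hC
  refine ⟨C * 16384 * (Jc.toReal + 1) * (Ac.toReal + 1),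
    by positivity, 1, one_pos, ?_⟩
  intro L hL x₀ Ξ g h hg hsum hh
  have hL1 : (1:ℝ) ≤ L := hL
  -- abbreviations
  set ξ : ℤ × ℤ → E2 := fun j => L • latt j with hξ
  -- the coefficient
  set c : Ξ → Ξ → ENNReal := fun i j =>
    if (i : ℤ × ℤ) ≠ (j : ℤ × ℤ) then
      ENNReal.ofReal C * ENNReal.ofReal (g i) * ENNReal.ofReal (theta (ξ i - ξ j))
    else 0 with hc
  -- the summand in the hypothesis
  set t : Ξ → Ξ → E2 → ℝ := fun i j x =>
    if (i : ℤ × ℤ) ≠ (j : ℤ × ℤ) then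
      g i * theta (x - ξ j) * theta (ξ i - ξ j)
    else 0 with ht
  have tnn : ∀ i j x, 0 ≤ t i j x := by
    intro i j x
    simp only [ht]
    split
    · exact mul_nonneg (mul_nonneg (hg i) (theta_nonneg _)) (theta_nonneg _)
    · exact le_refl 0
  have tinn : ∀ i x, 0 ≤ ∑' j : Ξ, t i j x :=
    fun i x => tsum_nonneg (fun j => tnn i j x)
  have Snn : ∀ x, 0 ≤ ∑' i : Ξ, ∑' j : Ξ, t i j x :=
    fun x => tsum_nonneg (fun i => tinn i x)
  -- Step A : pointwise bound
  have stepA : ∀ x, ENNReal.ofReal (|h x| * theta (x - x₀)) ≤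
      ∑' i : Ξ, ∑' j : Ξ,
        c i j * ENNReal.ofReal (theta (x - ξ j)) * ENNReal.ofReal (theta (x - x₀)) := by
    intro x
    have h1 : ENNReal.ofReal (|h x| * theta (x - x₀)) ≤
        ENNReal.ofReal ((C * ∑' i : Ξ, ∑' j : Ξ, t i j x) * theta (x - x₀)) :=
      ENNReal.ofReal_le_ofReal (mul_le_mul_of_nonneg_right (hh x) (theta_nonneg _))
    refine h1.trans ?_
    rw [ENNReal.ofReal_mul (mul_nonneg hC.le (Snn x)), ENNReal.ofReal_mul hC.le]
    have h2 : ENNReal.ofReal (∑' i : Ξ, ∑' j : Ξ, t i j x) ≤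
        ∑' i : Ξ, ∑' j : Ξ, ENNReal.ofReal (t i j x) := by
      refine (ofReal_tsum_le _ (fun i => tinn i x)).trans ?_
      exact ENNReal.tsum_le_tsum (fun i => ofReal_tsum_le _ (fun j => tnn i j x))
    refine le_trans (mul_le_mul_left
      (mul_le_mul_right h2 (ENNReal.ofReal C)) (ENNReal.ofReal (theta (x - x₀)))) ?_
    rw [mul_tsum_mul]
    apply le_of_eq
    refine tsum_congr (fun i => ?_)
    rw [mul_tsum_mul]
    refine tsum_congr (fun j => ?_)
    simp only [ht, hc]
    by_cases hij : (i : ℤ × ℤ) ≠ (j : ℤ × ℤ)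
    · rw [if_pos hij, if_pos hij,
        ENNReal.ofReal_mul (mul_nonneg (hg i) (theta_nonneg _)),
        ENNReal.ofReal_mul (hg i)]
      ring
    · rw [if_neg hij, if_neg hij]
      simp
  -- Step B : integrate
  have measj : ∀ (i j : Ξ), Measurable (fun x : E2 =>
      c i j * ENNReal.ofReal (theta (x - ξ j)) * ENNReal.ofReal (theta (x - x₀))) :=
    fun i j => (measurable_const.mul (meas_shift (ξ j))).mul (meas_shift x₀)
  have stepB : (∫⁻ x, ENNReal.ofReal (|h x| * theta (x - x₀))) ≤
      ∑' i : Ξ, ∑' j : Ξ, c i j * (16 * Jc * ENNReal.ofReal (theta (ξ j - x₀))) := by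
    calc (∫⁻ x, ENNReal.ofReal (|h x| * theta (x - x₀)))
        ≤ ∫⁻ x, ∑' i : Ξ, ∑' j : Ξ,
            c i j * ENNReal.ofReal (theta (x - ξ j)) * ENNReal.ofReal (theta (x - x₀)) :=
          lintegral_mono stepA
      _ = ∑' i : Ξ, ∫⁻ x, ∑' j : Ξ,
            c i j * ENNReal.ofReal (theta (x - ξ j)) * ENNReal.ofReal (theta (x - x₀)) :=
          lintegral_tsum (fun i => (Measurable.ennreal_tsum (fun j => measj i j)).aemeasurable)
      _ = ∑' i : Ξ, ∑' j : Ξ, ∫⁻ x,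
            c i j * ENNReal.ofReal (theta (x - ξ j)) * ENNReal.ofReal (theta (x - x₀)) := by
          refine tsum_congr (fun i => ?_)
          exact lintegral_tsum (fun j => (measj i j).aemeasurable)
      _ ≤ ∑' i : Ξ, ∑' j : Ξ, c i j * (16 * Jc * ENNReal.ofReal (theta (ξ j - x₀))) := by
          refine ENNReal.tsum_le_tsum (fun i => ENNReal.tsum_le_tsum (fun j => ?_))
          have : (∫⁻ x, c i j * ENNReal.ofReal (theta (x - ξ j)) *
              ENNReal.ofReal (theta (x - x₀))) =
              c i j * ∫⁻ x, ENNReal.ofReal (theta (x - ξ j)) *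
                ENNReal.ofReal (theta (x - x₀)) := by
            simp_rw [mul_assoc]
            exact lintegral_const_mul _ ((meas_shift (ξ j)).mul (meas_shift x₀))
          rw [this]
          exact mul_le_mul_right (key_integral (ξ j) x₀) _
  -- Step C : bound the inner sums
  have hsub1 : ∀ i : Ξ, (∑' j : Ξ, ENNReal.ofReal (theta (ξ i - ξ j))) ≤ 64 * Ac := by
    intro i
    refine (tsum_subset_le Ξ (fun n => ENNReal.ofReal (theta (ξ i - ξ n)))).trans ?_
    simp only [hξ]
    exact lattice_sum_bound hL1 (L • latt i)
  have hsub2 : (∑' j : Ξ, ENNReal.ofReal (theta (x₀ - ξ j))) ≤ 64 * Ac := by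
    refine (tsum_subset_le Ξ (fun n => ENNReal.ofReal (theta (x₀ - ξ n)))).trans ?_
    simp only [hξ]
    exact lattice_sum_bound hL1 x₀
  set D : ENNReal := 16384 * Jc * Ac * ENNReal.ofReal C with hD
  have stepC : ∀ i : Ξ, (∑' j : Ξ, c i j * (16 * Jc * ENNReal.ofReal (theta (ξ j - x₀)))) ≤
      D * ENNReal.ofReal (g i * theta (x₀ - ξ i)) := by
    intro i
    set K : ENNReal := ENNReal.ofReal C * ENNReal.ofReal (g i) * (16 * Jc) *
      (8 * ENNReal.ofReal (theta (ξ i - x₀))) with hK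
    have term_le : ∀ j : Ξ, c i j * (16 * Jc * ENNReal.ofReal (theta (ξ j - x₀))) ≤
        K * (ENNReal.ofReal (theta (ξ i - ξ j)) + ENNReal.ofReal (theta (x₀ - ξ j))) := by
      intro j
      by_cases hij : (i : ℤ × ℤ) ≠ (j : ℤ × ℤ)
      · have hθ : ENNReal.ofReal (theta (ξ i - ξ j)) * ENNReal.ofReal (theta (ξ j - x₀)) ≤
            8 * ENNReal.ofReal (theta (ξ i - x₀)) *
              (ENNReal.ofReal (theta (ξ i - ξ j)) + ENNReal.ofReal (theta (x₀ - ξ j))) := by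
          rw [theta_sub_rev (ξ j) x₀, ← ENNReal.ofReal_mul (theta_nonneg _),
            ← ENNReal.ofReal_add (theta_nonneg _) (theta_nonneg _),
            show (8:ENNReal) = ENNReal.ofReal 8 from (ENNReal.ofReal_ofNat 8).symm,
            ← ENNReal.ofReal_mul (by norm_num : (0:ℝ) ≤ 8),
            ← ENNReal.ofReal_mul (mul_nonneg (by norm_num) (theta_nonneg _))]
          apply ENNReal.ofReal_le_ofReal
          have h8 := theta_mul_le (ξ i - ξ j) (x₀ - ξ j)
          rw [show (ξ i - ξ j) - (x₀ - ξ j) = ξ i - x₀ by abel] at h8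
          exact h8
        have hcij : c i j = ENNReal.ofReal C * ENNReal.ofReal (g i) *
            ENNReal.ofReal (theta (ξ i - ξ j)) := by rw [hc]; simp only [if_pos hij]
        calc c i j * (16 * Jc * ENNReal.ofReal (theta (ξ j - x₀)))
            = (ENNReal.ofReal C * ENNReal.ofReal (g i) * (16 * Jc)) *
              (ENNReal.ofReal (theta (ξ i - ξ j)) * ENNReal.ofReal (theta (ξ j - x₀))) := by
              rw [hcij]; ring
          _ ≤ (ENNReal.ofReal C * ENNReal.ofReal (g i) * (16 * Jc)) *
              (8 * ENNReal.ofReal (theta (ξ i - x₀)) *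
                (ENNReal.ofReal (theta (ξ i - ξ j)) + ENNReal.ofReal (theta (x₀ - ξ j)))) :=
              mul_le_mul_right hθ _
          _ = K * (ENNReal.ofReal (theta (ξ i - ξ j)) + ENNReal.ofReal (theta (x₀ - ξ j))) := by
              rw [hK]; ring
      · have hcij : c i j = 0 := by rw [hc]; simp only [if_neg hij]
        rw [hcij, zero_mul]
        exact zero_le
    calc (∑' j : Ξ, c i j * (16 * Jc * ENNReal.ofReal (theta (ξ j - x₀))))
        ≤ ∑' j : Ξ, K * (ENNReal.ofReal (theta (ξ i - ξ j)) +
            ENNReal.ofReal (theta (x₀ - ξ j))) := ENNReal.tsum_le_tsum term_le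
      _ = K * ∑' j : Ξ, (ENNReal.ofReal (theta (ξ i - ξ j)) +
            ENNReal.ofReal (theta (x₀ - ξ j))) := ENNReal.tsum_mul_left
      _ ≤ K * (64 * Ac + 64 * Ac) := by
          refine mul_le_mul_right ?_ _
          rw [ENNReal.tsum_add]
          exact add_le_add (hsub1 i) hsub2
      _ = D * ENNReal.ofReal (g i * theta (x₀ - ξ i)) := by
          rw [hK, hD, ENNReal.ofReal_mul (hg i), theta_sub_rev x₀ (ξ i)]
          ring
  -- Step D & E : sum over i and compare constants
  have hJ : Jc ≤ ENNReal.ofReal (Jc.toReal + 1) := by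
    conv_lhs => rw [← ENNReal.ofReal_toReal Jc_ne_top]
    exact ENNReal.ofReal_le_ofReal (by linarith)
  have hA : Ac ≤ ENNReal.ofReal (Ac.toReal + 1) := by
    conv_lhs => rw [← ENNReal.ofReal_toReal Ac_ne_top]
    exact ENNReal.ofReal_le_ofReal (by linarith)
  have hJr : (0:ℝ) ≤ Jc.toReal := ENNReal.toReal_nonneg
  have hAr : (0:ℝ) ≤ Ac.toReal := ENNReal.toReal_nonneg
  have hDle : D ≤ ENNReal.ofReal (C * 16384 * (Jc.toReal + 1) * (Ac.toReal + 1)) := by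
    calc D ≤ 16384 * ENNReal.ofReal (Jc.toReal + 1) * ENNReal.ofReal (Ac.toReal + 1) *
          ENNReal.ofReal C := by rw [hD]; gcongr
      _ = ENNReal.ofReal (16384 * (Jc.toReal + 1) * (Ac.toReal + 1) * C) := by
          rw [ENNReal.ofReal_mul (by positivity), ENNReal.ofReal_mul (by positivity),
            ENNReal.ofReal_mul (by norm_num : (0:ℝ) ≤ 16384), ENNReal.ofReal_ofNat]
      _ = ENNReal.ofReal (C * 16384 * (Jc.toReal + 1) * (Ac.toReal + 1)) := by
          congr 1; ring
  refine stepB.trans ?_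
  calc (∑' i : Ξ, ∑' j : Ξ, c i j * (16 * Jc * ENNReal.ofReal (theta (ξ j - x₀))))
      ≤ ∑' i : Ξ, D * ENNReal.ofReal (g i * theta (x₀ - ξ i)) :=
        ENNReal.tsum_le_tsum stepC
    _ = D * ∑' i : Ξ, ENNReal.ofReal (g i * theta (x₀ - ξ i)) := ENNReal.tsum_mul_left
    _ = D * ENNReal.ofReal (∑' i : Ξ, g i * theta (x₀ - ξ i)) := by
        rw [ENNReal.ofReal_tsum_of_nonneg (f := fun i : Ξ => g i * theta (x₀ - ξ i))
          (fun i => mul_nonneg (hg i) (theta_nonneg _)) (by simp only [hξ]; exact hsum)]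
    _ ≤ ENNReal.ofReal (C * 16384 * (Jc.toReal + 1) * (Ac.toReal + 1)) *
          ENNReal.ofReal (∑' i : Ξ, g i * theta (x₀ - ξ i)) := mul_le_mul_left hDle _
    _ = ENNReal.ofReal ((C * 16384 * (Jc.toReal + 1) * (Ac.toReal + 1)) *
          ∑' i : Ξ, g i * theta (x₀ - ξ i)) := by
        rw [← ENNReal.ofReal_mul (by positivity)]
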